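/- Define $T(z) = \frac{(z+1)^2 - i(1-z)^2}{(z+1)^2 + i(1-z)^2}$. Then for pairwise distinct $a, b, c$ in the closed upper half unit disk with $T(a) \ne T(b)$, writing $k = \frac{c-b}{a-b}$, there are absolute constants such that $\frac{|k|^2}{C_1(|k|+1)} \le \left|\frac{T(c)-T(b)}{T(a)-T(b)}\right| \le C_2 |k|(1+|k|)$; in particular one may take $C_1, C_2$ of the form $5 \cdot \frac{8}{2(\sqrt 2 -1)}$-type constants (e.g. $C_1 = C_2 = 100$ works). -/

import Mathlib

open Complex

noncomputable def T (z : ℂ) : ℂ :=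
  ((z + 1) ^ 2 - I * (1 - z) ^ 2) / ((z + 1) ^ 2 + I * (1 - z) ^ 2)

lemma sqrt2_gt : (1.4:ℝ) ≤ Real.sqrt 2 := by
  nlinarith [Real.sq_sqrt (show (0:ℝ) ≤ 2 by norm_num), Real.sqrt_nonneg 2]

lemma absD_bounds (z : ℂ) (hz : ‖z‖ ≤ 1) (hz' : 0 ≤ z.im) :
    2 * (Real.sqrt 2 - 1) ≤ ‖(z + 1) ^ 2 + I * (1 - z) ^ 2‖ ∧
    ‖(z + 1) ^ 2 + I * (1 - z) ^ 2‖ ≤ 8 := by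
  have hs2 : (1:ℝ) ≤ Real.sqrt 2 := le_trans (by norm_num) sqrt2_gt
  have hsq : Real.sqrt 2 ^ 2 = 2 := Real.sq_sqrt (by norm_num)
  constructor
  · have hsC : ((Real.sqrt 2 : ℝ) : ℂ) ^ 2 = 2 := by
      rw [← Complex.ofReal_pow, hsq]; norm_num
    set s : ℂ := ((Real.sqrt 2 : ℝ) : ℂ) with hs
    have hfact : (z + 1) ^ 2 + I * (1 - z) ^ 2
        = (1 + I) * ((z - I * (1 + s)) * (z - I * (1 - s))) := by
      have hI : I ^ 2 = -1 := I_sq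
      linear_combination (I^2*(1+I)) * hsC + (2*z+1+I) * hI
    rw [hfact, norm_mul, norm_mul]
    have h1 : ‖1 + I‖ = Real.sqrt 2 := by
      rw [Complex.norm_def, Complex.normSq_apply]
      norm_num
    have h2 : Real.sqrt 2 ≤ ‖z - I * (1 + s)‖ := by
      have hn := norm_sub_norm_le (I * (1 + s)) z
      have habsw : ‖I * (1 + s)‖ = 1 + Real.sqrt 2 := by
        rw [norm_mul, Complex.norm_I, one_mul, hs,
          show (1 : ℂ) + ((Real.sqrt 2 : ℝ) : ℂ) = ((1 + Real.sqrt 2 : ℝ) : ℂ) by push_cast; ring,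
          Complex.norm_real, Real.norm_eq_abs]
        exact _root_.abs_of_nonneg (by linarith)
      have hcomm : ‖z - I * (1 + s)‖ = ‖I * (1 + s) - z‖ := by
        rw [← norm_neg]; ring_nf
      rw [hcomm]; rw [habsw] at hn; linarith
    have h3 : Real.sqrt 2 - 1 ≤ ‖z - I * (1 - s)‖ := by
      have him : (z - I * (1 - s)).im = z.im + (Real.sqrt 2 - 1) := by
        simp [hs, Complex.sub_im, Complex.mul_im]
        ring
      have h4 := Complex.abs_im_le_norm (z - I * (1 - s))
      rw [him] at h4
      have h5 : z.im + (Real.sqrt 2 - 1) ≤ ‖z - I * (1 - s)‖ :=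
        le_trans (le_abs_self _) h4
      linarith
    rw [h1]
    have hA : (0:ℝ) ≤ ‖z - I * (1 + s)‖ := norm_nonneg _
    have hAB : Real.sqrt 2 * (Real.sqrt 2 - 1)
        ≤ ‖z - I * (1 + s)‖ * ‖z - I * (1 - s)‖ :=
      mul_le_mul h2 h3 (by linarith) hA
    nlinarith [hAB, hsq, hs2]
  · have h1 : ‖z + 1‖ ≤ 2 := by
      calc ‖z + 1‖ ≤ ‖z‖ + ‖1‖ := norm_add_le _ _
        _ ≤ 2 := by rw [norm_one]; linarith
    have h2 : ‖1 - z‖ ≤ 2 := by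
      rw [sub_eq_add_neg]
      calc ‖1 + -z‖ ≤ ‖1‖ + ‖-z‖ := norm_add_le _ _
        _ ≤ 2 := by rw [norm_one, norm_neg]; linarith
    calc ‖(z + 1) ^ 2 + I * (1 - z) ^ 2‖
        ≤ ‖(z + 1) ^ 2‖ + ‖I * (1 - z) ^ 2‖ := norm_add_le _ _
      _ = ‖z + 1‖ ^ 2 + ‖1 - z‖ ^ 2 := by
          rw [norm_mul, Complex.norm_I, one_mul, norm_pow, norm_pow]
      _ ≤ 8 := by nlinarith [norm_nonneg (z + 1), norm_nonneg (1 - z)]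

lemma key_ineq (a b : ℂ) (ha : ‖a‖ ≤ 1) (ha' : 0 ≤ a.im)
    (hb : ‖b‖ ≤ 1) (hb' : 0 ≤ b.im) :
    ‖a - b‖ ≤ ‖1 - a * b‖ := by
  have ha2 : a.re ^ 2 + a.im ^ 2 ≤ 1 := by
    have h := Complex.sq_norm a
    rw [Complex.normSq_apply] at h
    nlinarith [norm_nonneg a]
  have hb2 : b.re ^ 2 + b.im ^ 2 ≤ 1 := by
    have h := Complex.sq_norm b
    rw [Complex.normSq_apply] at h
    nlinarith [norm_nonneg b]
  rw [Complex.norm_def, Complex.norm_def]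
  apply Real.sqrt_le_sqrt
  simp only [Complex.normSq_apply, Complex.sub_re, Complex.sub_im, Complex.mul_re,
    Complex.mul_im, Complex.one_re, Complex.one_im]
  nlinarith [mul_nonneg (sub_nonneg.2 ha2) (sub_nonneg.2 hb2), mul_nonneg ha' hb']

lemma Tdiff (b c : ℂ) (hDb : (b + 1) ^ 2 + I * (1 - b) ^ 2 ≠ 0)
    (hDc : (c + 1) ^ 2 + I * (1 - c) ^ 2 ≠ 0) :
    T c - T b = 8 * I * ((c - b) * (1 - b * c)) /
      (((c + 1) ^ 2 + I * (1 - c) ^ 2) * ((b + 1) ^ 2 + I * (1 - b) ^ 2)) := by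
  unfold T
  field_simp
  ring

lemma arith_bounds (k p m n dA dC : ℝ) (hk : 0 < k) (hp : 0 < p) (hm : 0 < m) (hn : 0 < n)
    (hpm : p ≤ m) (hqn : k * p ≤ n) (hnm : n ≤ m + (p + k * p)) (hmn : m ≤ n + (p + k * p))
    (hdA : 0.8 ≤ dA) (hdA8 : dA ≤ 8) (hdC : 0.8 ≤ dC) (hdC8 : dC ≤ 8) :
    k ^ 2 / (100 * (k + 1)) ≤ k * p * n * dA / (p * m * dC) ∧
    k * p * n * dA / (p * m * dC) ≤ 100 * k * (1 + k) := by
  have hdA0 : 0 < dA := by linarith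
  have hdC0 : 0 < dC := by linarith
  have hkm : k * m ≤ (2 * k + 1) * n := by
    nlinarith [mul_le_mul_of_nonneg_left hmn (le_of_lt hk), hqn,
      mul_le_mul_of_nonneg_left hqn (le_of_lt hk)]
  have hnb : n ≤ (2 + k) * m := by
    nlinarith [hpm, mul_le_mul_of_nonneg_right hpm hk.le]
  constructor
  · rw [div_le_div_iff₀ (by positivity) (by positivity)]
    have e1 : (k * p) * (k * m) ≤ (k * p) * ((2 * k + 1) * n) :=
      mul_le_mul_of_nonneg_left hkm (by positivity)
    have e2 : ((k * p) * ((2 * k + 1) * n)) * dC ≤ ((k * p) * ((2 * k + 1) * n)) * 8 :=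
      mul_le_mul_of_nonneg_left hdC8 (by positivity)
    have e3 : ((k * p) * (k * m)) * dC ≤ ((k * p) * ((2 * k + 1) * n)) * dC :=
      mul_le_mul_of_nonneg_right e1 hdC0.le
    have e4 : (k * p * n * (100 * (k + 1))) * 0.8 ≤ (k * p * n * (100 * (k + 1))) * dA :=
      mul_le_mul_of_nonneg_left hdA (by positivity)
    have e5 : (k * p * n) * (16 * k + 8) ≤ (k * p * n) * (80 * k + 80) :=
      mul_le_mul_of_nonneg_left (by linarith) (by positivity)
    nlinarith [e2, e3, e4, e5]
  · rw [div_le_iff₀ (by positivity)]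
    have f1 : (k * p) * n ≤ (k * p) * ((2 + k) * m) :=
      mul_le_mul_of_nonneg_left hnb (by positivity)
    have f2 : ((k * p) * ((2 + k) * m)) * dA ≤ ((k * p) * ((2 + k) * m)) * 8 :=
      mul_le_mul_of_nonneg_left hdA8 (by positivity)
    have f3 : ((k * p) * n) * dA ≤ ((k * p) * ((2 + k) * m)) * dA :=
      mul_le_mul_of_nonneg_right f1 hdA0.le
    have f4 : (100 * k * (1 + k) * (p * m)) * 0.8 ≤ (100 * k * (1 + k) * (p * m)) * dC :=
      mul_le_mul_of_nonneg_left hdC (by positivity)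
    have f5 : (k * p * m) * (16 + 8 * k) ≤ (k * p * m) * (80 + 80 * k) :=
      mul_le_mul_of_nonneg_left (by linarith) (by positivity)
    nlinarith [f2, f3, f4, f5]

theorem stmt_7 (a b c : ℂ)
    (ha : ‖a‖ ≤ 1) (ha' : 0 ≤ a.im)
    (hb : ‖b‖ ≤ 1) (hb' : 0 ≤ b.im)
    (hc : ‖c‖ ≤ 1) (hc' : 0 ≤ c.im)
    (hab : a ≠ b) (hbc : b ≠ c) (hac : a ≠ c)
    (hT : T a ≠ T b) :
    ‖(c - b) / (a - b)‖ ^ 2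
        / (100 * (‖(c - b) / (a - b)‖ + 1))
      ≤ ‖(T c - T b) / (T a - T b)‖ ∧
    ‖(T c - T b) / (T a - T b)‖
      ≤ 100 * ‖(c - b) / (a - b)‖ * (1 + ‖(c - b) / (a - b)‖) := by
  have hs2 : (1.4:ℝ) ≤ Real.sqrt 2 := sqrt2_gt
  obtain ⟨hAl, hAu⟩ := absD_bounds a ha ha'
  obtain ⟨hBl, hBu⟩ := absD_bounds b hb hb'
  obtain ⟨hCl, hCu⟩ := absD_bounds c hc hc'
  have hDa : (a + 1) ^ 2 + I * (1 - a) ^ 2 ≠ 0 := by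
    intro h; rw [h, norm_zero] at hAl; linarith
  have hDb : (b + 1) ^ 2 + I * (1 - b) ^ 2 ≠ 0 := by
    intro h; rw [h, norm_zero] at hBl; linarith
  have hDc : (c + 1) ^ 2 + I * (1 - c) ^ 2 ≠ 0 := by
    intro h; rw [h, norm_zero] at hCl; linarith
  have hab' : a - b ≠ 0 := sub_ne_zero.2 hab
  have hcb' : c - b ≠ 0 := sub_ne_zero.2 (Ne.symm hbc)
  set dA := ‖(a + 1) ^ 2 + I * (1 - a) ^ 2‖ with hdA_def
  set dC := ‖(c + 1) ^ 2 + I * (1 - c) ^ 2‖ with hdC_def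
  set p := ‖a - b‖ with hp_def
  set q := ‖c - b‖ with hq_def
  set m := ‖1 - b * a‖ with hm_def
  set n := ‖1 - b * c‖ with hn_def
  have hp : 0 < p := norm_pos_iff.2 hab'
  have hq : 0 < q := norm_pos_iff.2 hcb'
  have hpm : p ≤ m := by
    have h := key_ineq b a hb hb' ha ha'
    rwa [show ‖b - a‖ = p by rw [hp_def, norm_sub_rev]] at h
  have hqn : q ≤ n := by
    have h := key_ineq b c hb hb' hc hc'
    rwa [show ‖b - c‖ = q by rw [hq_def, norm_sub_rev]] at h
  have hm : 0 < m := lt_of_lt_of_le hp hpm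
  have hn : 0 < n := lt_of_lt_of_le hq hqn
  have hm0 : (1 : ℂ) - b * a ≠ 0 := by
    intro h; rw [hm_def, h, norm_zero] at hm; exact lt_irrefl _ hm
  have hac_tri : ‖a - c‖ ≤ p + q := by
    calc ‖a - c‖ ≤ ‖a - b‖ + ‖b - c‖ :=
          norm_sub_le_norm_sub_add_norm_sub a b c
      _ = p + q := by rw [hp_def, hq_def, norm_sub_rev b c]
  have hnm : n ≤ m + (p + q) := by
    have h1 : (1:ℂ) - b * c = (1 - b * a) + b * (a - c) := by ring
    calc n = ‖(1 - b * a) + b * (a - c)‖ := by rw [hn_def, h1]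
      _ ≤ m + ‖b‖ * ‖a - c‖ := by
          refine le_trans (norm_add_le _ _) ?_
          rw [hm_def, norm_mul]
      _ ≤ m + (p + q) := by
          have h2 := norm_nonneg (a - c)
          nlinarith
  have hmn : m ≤ n + (p + q) := by
    have h1 : (1:ℂ) - b * a = (1 - b * c) + b * (c - a) := by ring
    calc m = ‖(1 - b * c) + b * (c - a)‖ := by rw [hm_def, h1]
      _ ≤ n + ‖b‖ * ‖c - a‖ := by
          refine le_trans (norm_add_le _ _) ?_
          rw [hn_def, norm_mul]
      _ ≤ n + (p + q) := by
          rw [norm_sub_rev]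
          have h2 := norm_nonneg (a - c)
          nlinarith
  have hratio : (T c - T b) / (T a - T b)
      = ((c - b) * (1 - b * c) * ((a + 1) ^ 2 + I * (1 - a) ^ 2)) /
        ((a - b) * (1 - b * a) * ((c + 1) ^ 2 + I * (1 - c) ^ 2)) := by
    rw [Tdiff b c hDb hDc, Tdiff b a hDb hDa]
    rw [div_div_div_comm]
    field_simp
  have hR : ‖(T c - T b) / (T a - T b)‖ = q * n * dA / (p * m * dC) := by
    rw [hratio, norm_div, norm_mul, norm_mul, norm_mul, norm_mul]
  have hK : ‖(c - b) / (a - b)‖ = q / p := by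
    rw [norm_div]
  rw [hR, hK]
  set k : ℝ := q / p with hk_def
  have hk : 0 < k := div_pos hq hp
  have hqk : q = k * p := by rw [hk_def]; field_simp
  have key := arith_bounds k p m n dA dC hk hp hm hn hpm (by rw [← hqk]; exact hqn)
    (by rw [← hqk]; exact hnm) (by rw [← hqk]; exact hmn)
    (by rw [hdA_def]; linarith) (by rw [hdA_def]; exact hAu)
    (by rw [hdC_def]; linarith) (by rw [hdC_def]; exact hCu)
  rw [hqk]
  exact key
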